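/- Key step in the proof of Lemma 3.9: let Z ⊆ V be a nonempty proper subset such that the subgraph of G induced on Z is connected, and assume that every pair (i, j) with i ∈ Z, j ∉ Z and m i j > 0 is separating. Then either Z or its complement V∖Z is a disjoint union of tails; that is, there exist pairwise disjoint tails Q_1, …, Q_k with Z = Q_1 ∪ … ∪ Q_k, or there exist pairwise disjoint tails Q_1, …, Q_k with V∖Z = Q_1 ∪ … ∪ Q_k. -/

import Mathlib

open Finset

variable {V : Type*}

/-- The multidegree of a divisor `D` on the nodal curve with dual multigraph `m`:
`(deg D) j = ∑ i, (D i - D j) * m i j`. -/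
def mdeg [Fintype V] (m : V → V → ℕ) (D : V → ℤ) : V → ℤ :=
  fun j => ∑ i, (D i - D j) * (m i j : ℤ)

/-- `k_Z`: the number of nodes where the subcurve `Z` meets its complementary curve. -/
def kdeg [Fintype V] [DecidableEq V] (m : V → V → ℕ) (Z : Finset V) : ℕ :=
  ∑ i ∈ Z, ∑ j ∈ Zᶜ, m i j

/-- The pair `(i, j)` (with `m i j > 0`) corresponds to a separating node:
`m i j = 1` and the edge `{i, j}` is a bridge of `G`. -/
def Separating (m : V → V → ℕ) (G : SimpleGraph V) (i j : V) : Prop :=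
  m i j = 1 ∧ G.IsBridge s(i, j)

/-- A tail: a nonempty proper subcurve meeting its complement in a single node. -/
def IsTail [Fintype V] [DecidableEq V] (m : V → V → ℕ) (Q : Finset V) : Prop :=
  Q.Nonempty ∧ Q ≠ Finset.univ ∧ kdeg m Q = 1

/-- A divisor is a sum of tails if `D = c·1_V + ∑ h a_h · 1_{Q_h}` with the `Q_h` tails. -/
def SumOfTails [Fintype V] [DecidableEq V] (m : V → V → ℕ) (D : V → ℤ) : Prop :=
  ∃ (c : ℤ) (k : ℕ) (a : Fin k → ℤ) (Q : Fin k → Finset V),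
    (∀ h, IsTail m (Q h)) ∧
    ∀ i, D i = c + ∑ h, a h * (if i ∈ Q h then 1 else 0)

/-- `Λ_X`: the group of multidegrees of twisters, i.e. the image of `mdeg`. -/
def Lambda [Fintype V] (m : V → V → ℕ) : Set (V → ℤ) := Set.range (mdeg m)

/-- `Λ_X^0`: multidegrees of sums of tails. -/
def Lambda0 [Fintype V] [DecidableEq V] (m : V → V → ℕ) : Set (V → ℤ) :=
  {t | ∃ D, SumOfTails m D ∧ mdeg m D = t}

/-- The essential connectivity `ε(X)`: the infimum of `k_Z` over nonempty proper `Z ⊆ V`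
such that some pair `(i,j)` with `i ∈ Z`, `j ∉ Z`, `m i j > 0` is not separating. -/
noncomputable def eps [Fintype V] [DecidableEq V] (m : V → V → ℕ) (G : SimpleGraph V) : ℕ∞ :=
  sInf ((fun Z : Finset V => (kdeg m Z : ℕ∞)) ''
    {Z | Z.Nonempty ∧ Z ≠ Finset.univ ∧
      ∃ i ∈ Z, ∃ j, j ∉ Z ∧ 0 < m i j ∧ ¬ Separating m G i j})

private lemma reach_of_induce' {G H : SimpleGraph V} {s : Set V}
    (hH : ∀ x y, x ∈ s → y ∈ s → G.Adj x y → H.Adj x y)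
    {a b : s} (h : (G.induce s).Reachable a b) : H.Reachable a b := by
  obtain ⟨w⟩ := h
  induction w with
  | nil => exact SimpleGraph.Reachable.refl _
  | @cons u v _ hadj p ih =>
      exact (hH u v u.2 v.2 hadj).reachable.trans ih

/-- Key step in the proof of Lemma 3.9: if a connected subcurve `Z` meets its complement
only in separating nodes, then `Z` or its complement is a disjoint union of tails. -/
theorem connected_meets_in_sep_nodes [Fintype V] [DecidableEq V] [Nonempty V]
    (m : V → V → ℕ) (hsym : ∀ i j, m i j = m j i) (hdiag : ∀ i, m i i = 0)
    (G : SimpleGraph V) (hG : ∀ i j, G.Adj i j ↔ i ≠ j ∧ 0 < m i j)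
    (hconn : G.Connected)
    (Z : Finset V) (hZne : Z.Nonempty) (hZu : Z ≠ Finset.univ)
    (hZconn : (G.induce (↑Z : Set V)).Connected)
    (hsep : ∀ i ∈ Z, ∀ j, j ∉ Z → 0 < m i j → Separating m G i j) :
    (∃ (k : ℕ) (Q : Fin k → Finset V), (∀ h, IsTail m (Q h)) ∧
        (∀ a b, a ≠ b → Disjoint (Q a) (Q b)) ∧ Z = Finset.univ.biUnion Q) ∨
    (∃ (k : ℕ) (Q : Fin k → Finset V), (∀ h, IsTail m (Q h)) ∧
        (∀ a b, a ≠ b → Disjoint (Q a) (Q b)) ∧ Zᶜ = Finset.univ.biUnion Q) := by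
  classical
  right
  set s : Set V := {v | v ∉ Z} with hs
  obtain ⟨k, ⟨e⟩⟩ := Finite.exists_equiv_fin ((G.induce s).ConnectedComponent)
  set Q : Fin k → Finset V := fun h => Finset.univ.filter
    (fun v => ∃ hv : v ∈ s, e ((G.induce s).connectedComponentMk ⟨v, hv⟩) = h) with hQdef
  have hmemQ : ∀ (h : Fin k) (v : V), v ∈ Q h ↔
      ∃ hv : v ∈ s, e ((G.induce s).connectedComponentMk ⟨v, hv⟩) = h := by
    intro h v; simp [hQdef]
  have hQs : ∀ (h : Fin k) (v : V), v ∈ Q h → v ∉ Z := by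
    intro h v hv
    obtain ⟨hv, -⟩ := (hmemQ h v).mp hv
    exact hv
  -- Lemma A: edges out of Q h within the complement of Z stay in Q h
  have hA : ∀ (h : Fin k), ∀ i ∈ Q h, ∀ j, j ∉ Z → 0 < m i j → j ∈ Q h := by
    intro h i hi j hjZ hm
    obtain ⟨his, hic⟩ := (hmemQ h i).mp hi
    have hjs : j ∈ s := hjZ
    have hne : i ≠ j := by
      rintro rfl
      simp [hdiag i] at hm
    have hadj : (G.induce s).Adj ⟨i, his⟩ ⟨j, hjs⟩ := (hG i j).mpr ⟨hne, hm⟩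
    refine (hmemQ h j).mpr ⟨hjs, ?_⟩
    rw [SimpleGraph.ConnectedComponent.sound hadj.symm.reachable]
    exact hic
  obtain ⟨z, hz⟩ := hZne
  have key : ∀ h : Fin k, IsTail m (Q h) := by
    intro h
    -- nonempty
    obtain ⟨⟨w0, hw0s⟩, hrep⟩ : ∃ v, (G.induce s).connectedComponentMk v = e.symm h :=
      Quot.exists_rep (e.symm h)
    have hw0Q : w0 ∈ Q h := (hmemQ h w0).mpr ⟨hw0s, by rw [hrep, e.apply_symm_apply]⟩
    have hQne : (Q h).Nonempty := ⟨w0, hw0Q⟩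
    have hQnu : Q h ≠ Finset.univ := by
      intro hu
      exact hQs h z (hu ▸ Finset.mem_univ z) hz
    -- existence of a crossing edge
    obtain ⟨p⟩ := hconn.preconnected w0 z
    obtain ⟨d, -, hdf, hds⟩ := p.exists_boundary_dart (↑(Q h) : Set V)
      (by exact_mod_cast hw0Q) (by intro hzQ; exact hQs h z (by exact_mod_cast hzQ) hz)
    set i0 := d.fst with hi0
    set j0 := d.snd with hj0
    have hdf' : i0 ∈ Q h := by exact_mod_cast hdf
    have hadj0 : G.Adj i0 j0 := d.adj
    have hm0 : 0 < m i0 j0 := ((hG i0 j0).mp hadj0).2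
    have hj0Z : j0 ∈ Z := by
      by_contra hj0
      exact hds (by exact_mod_cast hA h i0 hdf' j0 hj0 hm0)
    have hj0notQ : j0 ∉ Q h := fun hj0Q => hQs h j0 hj0Q hj0Z
    -- uniqueness of the crossing edge
    have hC : ∀ i ∈ Q h, ∀ j ∈ Z, 0 < m i j → i = i0 ∧ j = j0 := by
      intro i hi j hjZ hm
      by_contra hcon
      have hiZ : i ∉ Z := hQs h i hi
      obtain ⟨-, hbr⟩ := hsep j hjZ i hiZ (by rw [hsym]; exact hm)
      rw [SimpleGraph.isBridge_iff] at hbr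
      apply hbr
      set G' := G \ SimpleGraph.fromEdgeSet {s(j, i)} with hG'
      have hZedge : ∀ x y, x ∈ (↑Z : Set V) → y ∈ (↑Z : Set V) → G.Adj x y → G'.Adj x y := by
        intro x y hx hy hxy
        rw [hG', SimpleGraph.sdiff_adj]
        refine ⟨hxy, ?_⟩
        rw [SimpleGraph.fromEdgeSet_adj]
        rintro ⟨heq, -⟩
        rw [Set.mem_singleton_iff, Sym2.eq_iff] at heq
        rcases heq with ⟨-, rfl⟩ | ⟨rfl, -⟩
        · exact hiZ hy
        · exact hiZ hx
      have hsedge : ∀ x y, x ∈ s → y ∈ s → G.Adj x y → G'.Adj x y := by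
        intro x y hx hy hxy
        rw [hG', SimpleGraph.sdiff_adj]
        refine ⟨hxy, ?_⟩
        rw [SimpleGraph.fromEdgeSet_adj]
        rintro ⟨heq, -⟩
        rw [Set.mem_singleton_iff, Sym2.eq_iff] at heq
        rcases heq with ⟨rfl, -⟩ | ⟨-, rfl⟩
        · exact hx hjZ
        · exact hy hjZ
      have r1 : G'.Reachable j j0 :=
        reach_of_induce' hZedge (hZconn.preconnected ⟨j, by exact_mod_cast hjZ⟩
          ⟨j0, by exact_mod_cast hj0Z⟩)
      have r2 : G'.Adj j0 i0 := by
        rw [hG', SimpleGraph.sdiff_adj]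
        refine ⟨hadj0.symm, ?_⟩
        rw [SimpleGraph.fromEdgeSet_adj]
        rintro ⟨heq, -⟩
        rw [Set.mem_singleton_iff, Sym2.eq_iff] at heq
        rcases heq with ⟨h1, h2⟩ | ⟨h1, -⟩
        · exact hcon ⟨h2.symm, h1.symm⟩
        · exact (hQs h i hi) (h1 ▸ hj0Z)
      have r3 : G'.Reachable i0 i := by
        obtain ⟨hi0s, hi0c⟩ := (hmemQ h i0).mp hdf'
        obtain ⟨his, hic⟩ := (hmemQ h i).mp hi
        have hcc : (G.induce s).connectedComponentMk ⟨i0, hi0s⟩ =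
            (G.induce s).connectedComponentMk ⟨i, his⟩ := e.injective (hi0c.trans hic.symm)
        exact reach_of_induce' hsedge (SimpleGraph.ConnectedComponent.exact hcc)
      exact r1.trans (r2.reachable.trans r3)
    -- the degree computation
    have hone : m i0 j0 = 1 := by
      rw [hsym]
      exact (hsep j0 hj0Z i0 (hQs h i0 hdf') (by rw [hsym]; exact hm0)).1
    have hk : kdeg m (Q h) = 1 := by
      rw [kdeg, ← Finset.sum_product']
      rw [Finset.sum_eq_single (i0, j0)]
      · exact hone
      · rintro ⟨i, j⟩ hmem hne
        simp only [Finset.mem_product, Finset.mem_compl] at hmem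
        by_contra hmz
        have hm' : 0 < m i j := Nat.pos_of_ne_zero hmz
        have hjZ : j ∈ Z := by
          by_contra hjZ
          exact hmem.2 (hA h i hmem.1 j hjZ hm')
        obtain ⟨h1, h2⟩ := hC i hmem.1 j hjZ hm'
        exact hne (by rw [h1, h2])
      · intro habs
        exact absurd (Finset.mem_product.mpr ⟨hdf', Finset.mem_compl.mpr hj0notQ⟩) habs
    exact ⟨hQne, hQnu, hk⟩
  refine ⟨k, Q, key, ?_, ?_⟩
  · intro a b hab
    rw [Finset.disjoint_left]
    intro v hva hvb
    obtain ⟨hv1, h1⟩ := (hmemQ a v).mp hva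
    obtain ⟨hv2, h2⟩ := (hmemQ b v).mp hvb
    exact hab (h1 ▸ h2 ▸ rfl)
  · ext v
    simp only [Finset.mem_compl, Finset.mem_biUnion, Finset.mem_univ, true_and]
    constructor
    · intro hv
      exact ⟨e ((G.induce s).connectedComponentMk ⟨v, hv⟩),
        (hmemQ _ v).mpr ⟨hv, rfl⟩⟩
    · rintro ⟨h, hvh⟩
      exact hQs h v hvh
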